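/- arXiv:1311.2147 — 2 statements merged into one kernel-verified Lean document; each statement's English description precedes it below -/
import Mathlib

section
/- For every source s ∈ V and every vertex x ∈ V with x ≠ s, the dependency of s on x satisfies the recursion δ_{s•}(x) = Σ_{w : x ∈ P_s(w)} (σ_{sx} / σ_{sw}) · (1 + δ_{s•}(w)). -/
open scoped ENNReal

namespace BC

variable {V : Type*}

/-- `p` is a path from `s` to `t` in the weighted digraph with weight function `w`;
an edge is present iff its weight is not `⊤`. -/
def IsPath (w : V → V → ℝ≥0∞) (s t : V) (p : List V) : Prop :=
  p ≠ [] ∧ p.head? = some s ∧ p.getLast? = some t ∧ p.Chain' (fun a b => w a b ≠ ⊤)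

/-- The weight of a path: the sum of the weights of its consecutive edges. -/
noncomputable def pWeight (w : V → V → ℝ≥0∞) (p : List V) : ℝ≥0∞ :=
  ((p.zip p.tail).map fun e => w e.1 e.2).sum

/-- The shortest-path distance `d(s,t)` (equal to `⊤` if no path exists). -/
noncomputable def dist (w : V → V → ℝ≥0∞) (s t : V) : ℝ≥0∞ :=
  ⨅ p ∈ {p | IsPath w s t p}, pWeight w p

/-- `p` is a shortest path from `s` to `t`. -/
def IsShortest (w : V → V → ℝ≥0∞) (s t : V) (p : List V) : Prop :=
  IsPath w s t p ∧ pWeight w p = dist w s t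

/-- `σ_{st}`: the number of shortest paths from `s` to `t`. -/
noncomputable def nsp (w : V → V → ℝ≥0∞) (s t : V) : ℕ :=
  Set.ncard {p | IsShortest w s t p}

/-- `σ_{st}(x)`: the number of shortest paths from `s` to `t` passing through `x`. -/
noncomputable def nspVia (w : V → V → ℝ≥0∞) (s t x : V) : ℕ :=
  Set.ncard {p | IsShortest w s t p ∧ x ∈ p}

/-- The directed edge `(a,b)` lies on the path `p`. -/
def edgeOn (p : List V) (a b : V) : Prop := (a, b) ∈ p.zip p.tail

/-- The shortest-path DAG rooted at `s`: the edges lying on shortest paths from `s`. -/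
def dagSet (w : V → V → ℝ≥0∞) (s : V) : Set (V × V) :=
  {e | w e.1 e.2 ≠ ⊤ ∧ dist w s e.1 ≠ ⊤ ∧ dist w s e.1 + w e.1 e.2 = dist w s e.2}

/- The dependency `δ_{s•}(x) = Σ_{t ∈ V \ {x,s}} σ_{st}(x)/σ_{st}`
(with the convention that a pair dependency is 0 when `σ_{st} = 0`,
which agrees with division by zero in Lean). -/
open Classical in
noncomputable def dep [Fintype V] (w : V → V → ℝ≥0∞) (s x : V) : ℝ :=
  ∑ t : V, if t ≠ x ∧ t ≠ s then (nspVia w s t x : ℝ) / (nsp w s t : ℝ) else 0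


/-! ### Auxiliary lemmas -/

section Aux

variable {w : V → V → ℝ≥0∞} {s t u x y : V} {p q : List V}

lemma pWeight_nil : pWeight w ([] : List V) = 0 := rfl

lemma pWeight_single : pWeight w [x] = 0 := rfl

lemma pWeight_cons_cons {a b : V} {l : List V} :
    pWeight w (a :: b :: l) = w a b + pWeight w (b :: l) := by
  simp [pWeight]

lemma pWeight_ne_top (h : p.Chain' (fun a b => w a b ≠ ⊤)) : pWeight w p ≠ ⊤ := by
  induction p with
  | nil => simp [pWeight_nil]
  | cons a l ih =>
    cases l with
    | nil => simp [pWeight_single]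
    | cons b m =>
      replace h := List.isChain_cons_cons.1 h
      rw [pWeight_cons_cons]
      exact ENNReal.add_ne_top.2 ⟨h.1, ih h.2⟩

lemma IsPath.pWeight_ne_top (h : IsPath w s t p) : pWeight w p ≠ ⊤ :=
  BC.pWeight_ne_top h.2.2.2

lemma IsPath.head_eq (h : IsPath w s t p) : ∃ l, p = s :: l := by
  obtain ⟨hne, hh, -, -⟩ := h
  cases p with
  | nil => simp at hne
  | cons a l => simp_all

lemma isPath_single : IsPath w s s [s] := by
  refine ⟨by simp, by simp, by simp, List.isChain_singleton _⟩

lemma isPath_single_iff : IsPath w s t [x] ↔ x = s ∧ t = s := by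
  constructor
  · rintro ⟨-, h1, h2, -⟩
    simp only [List.head?_cons, Option.some.injEq] at h1
    simp only [List.getLast?_singleton, Option.some.injEq] at h2
    exact ⟨h1, h2.symm.trans h1⟩
  · rintro ⟨rfl, rfl⟩; exact isPath_single

lemma isPath_cons_cons {a b : V} {l : List V} :
    IsPath w s t (a :: b :: l) ↔ a = s ∧ w a b ≠ ⊤ ∧ IsPath w b t (b :: l) := by
  constructor
  · rintro ⟨-, h1, h2, h3⟩
    replace h3 := List.isChain_cons_cons.1 h3
    simp only [List.head?_cons, Option.some.injEq] at h1
    refine ⟨h1, h3.1, by simp, by simp, ?_, h3.2⟩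
    rwa [List.getLast?_cons_cons] at h2
  · rintro ⟨rfl, hw, -, -, h2, h3⟩
    refine ⟨by simp, by simp, ?_, List.isChain_cons_cons.2 ⟨hw, h3⟩⟩
    rwa [List.getLast?_cons_cons]

/-- Splitting a path at an intermediate vertex. -/
lemma isPath_split {l₁ l₂ : List V} (h : IsPath w s t (l₁ ++ u :: l₂)) :
    IsPath w s u (l₁ ++ [u]) ∧ IsPath w u t (u :: l₂) ∧
      pWeight w (l₁ ++ u :: l₂) = pWeight w (l₁ ++ [u]) + pWeight w (u :: l₂) := by
  induction l₁ generalizing s with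
  | nil =>
    obtain ⟨l, hl⟩ := h.head_eq
    simp only [List.nil_append, List.cons.injEq] at hl
    obtain ⟨rfl, -⟩ := hl
    simpa [pWeight_single] using ⟨isPath_single, h⟩
  | cons a l₁ ih =>
    obtain ⟨l, hl⟩ := h.head_eq
    simp only [List.cons_append, List.cons.injEq] at hl
    obtain ⟨rfl, -⟩ := hl
    cases l₁ with
    | nil =>
      simp only [List.nil_append, List.cons_append] at h ⊢
      obtain ⟨-, hw, h'⟩ := isPath_cons_cons.1 h
      obtain ⟨h1, h2, h3⟩ := ih h'
      refine ⟨isPath_cons_cons.2 ⟨rfl, hw, by simpa using h1⟩, h2, ?_⟩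
      rw [pWeight_cons_cons, pWeight_cons_cons, pWeight_single, add_zero]
    | cons b l₁' =>
      simp only [List.cons_append] at h ⊢
      obtain ⟨-, hw, h'⟩ := isPath_cons_cons.1 h
      rw [← List.cons_append] at h'
      obtain ⟨h1, h2, h3⟩ := ih h'
      rw [List.cons_append] at h1 h3
      refine ⟨isPath_cons_cons.2 ⟨rfl, hw, h1⟩, h2, ?_⟩
      rw [pWeight_cons_cons, pWeight_cons_cons, h3, add_assoc]
      rfl

/-- Gluing two paths at a common endpoint. -/
lemma isPath_glue {l₂ : List V} (h1 : IsPath w s u p) (h2 : IsPath w u t (u :: l₂)) :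
    IsPath w s t (p ++ l₂) ∧ pWeight w (p ++ l₂) = pWeight w p + pWeight w (u :: l₂) := by
  induction p generalizing s with
  | nil => exact absurd rfl h1.1
  | cons a l ih =>
    obtain ⟨l', hl'⟩ := h1.head_eq
    simp only [List.cons.injEq] at hl'
    obtain ⟨rfl, -⟩ := hl'
    cases l with
    | nil =>
      obtain ⟨-, rfl⟩ := (isPath_single_iff.1 h1)
      simpa [pWeight_single] using h2
    | cons b m =>
      obtain ⟨-, hw, h'⟩ := isPath_cons_cons.1 h1
      obtain ⟨g1, g2⟩ := ih h'
      rw [List.cons_append] at g1 g2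
      simp only [List.cons_append]
      refine ⟨isPath_cons_cons.2 ⟨rfl, hw, g1⟩, ?_⟩
      rw [pWeight_cons_cons, pWeight_cons_cons, g2, add_assoc]

lemma dist_le (h : IsPath w s t p) : dist w s t ≤ pWeight w p := by
  exact iInf₂_le p h

lemma dist_self : dist w s s = 0 :=
  le_antisymm (by simpa [pWeight_single] using dist_le (isPath_single (w := w) (s := s)))
    zero_le

lemma dist_ne_top_of_path (h : IsPath w s t p) : dist w s t ≠ ⊤ :=
  fun ht => h.pWeight_ne_top (top_le_iff.1 (ht ▸ dist_le h))

lemma exists_path_of_dist_ne_top (h : dist w s t ≠ ⊤) : ∃ p, IsPath w s t p := by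
  by_contra hc
  push_neg at hc
  apply h
  have : {p | IsPath w s t p} = ∅ := Set.eq_empty_iff_forall_notMem.2 hc
  simp [dist, this]

lemma pWeight_pos (hpos : ∀ a b, 0 < w a b) {a b : V} {l : List V} :
    0 < pWeight w (a :: b :: l) := by
  rw [pWeight_cons_cons]
  exact lt_of_lt_of_le (hpos a b) le_self_add

lemma exists_dup_decomp {l : List V} (h : ¬ l.Nodup) :
    ∃ (a : V) (l₁ l₂ l₃ : List V), l = l₁ ++ a :: (l₂ ++ a :: l₃) := by
  induction l with
  | nil => simp at h
  | cons x xs ih =>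
    rw [List.nodup_cons] at h
    push_neg at h
    by_cases hx : x ∈ xs
    · obtain ⟨m₁, m₂, rfl⟩ := List.append_of_mem hx
      exact ⟨x, [], m₁, m₂, by simp⟩
    · obtain ⟨a, l₁, l₂, l₃, rfl⟩ := ih (h hx)
      exact ⟨a, x :: l₁, l₂, l₃, by simp⟩

lemma exists_lt_of_not_nodup (hpos : ∀ a b, 0 < w a b) (h : IsPath w s t p)
    (hnd : ¬ p.Nodup) :
    ∃ q, IsPath w s t q ∧ pWeight w q < pWeight w p ∧ q.length < p.length := by
  obtain ⟨a, l₁, l₂, l₃, rfl⟩ := exists_dup_decomp hnd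
  obtain ⟨h1, h2, h3⟩ := isPath_split h
  have h2' : IsPath w a t ((a :: l₂) ++ a :: l₃) := h2
  obtain ⟨g1, g2, g3⟩ := isPath_split h2'
  obtain ⟨k1, k2⟩ := isPath_glue h1 g2
  refine ⟨(l₁ ++ [a]) ++ l₃, k1, ?_, by simp⟩
  rw [k2, h3]
  have h2eq : pWeight w (a :: (l₂ ++ a :: l₃)) = pWeight w ((a :: l₂) ++ [a]) + pWeight w (a :: l₃) := g3
  rw [h2eq]
  have hmid : 0 < pWeight w ((a :: l₂) ++ [a]) := by
    cases l₂ with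
    | nil => exact pWeight_pos hpos
    | cons b m => exact pWeight_pos hpos
  have hfin : pWeight w (a :: l₃) ≠ ⊤ := g2.pWeight_ne_top
  have hpre : pWeight w (l₁ ++ [a]) ≠ ⊤ := h1.pWeight_ne_top
  calc pWeight w (l₁ ++ [a]) + pWeight w (a :: l₃)
      < pWeight w (l₁ ++ [a]) + (pWeight w ((a :: l₂) ++ [a]) + pWeight w (a :: l₃)) := by
        refine ENNReal.add_lt_add_left hpre ?_
        calc pWeight w (a :: l₃) = 0 + pWeight w (a :: l₃) := (zero_add _).symm
          _ < _ := by
            exact ENNReal.add_lt_add_right hfin hmid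

lemma exists_nodup_le_aux (hpos : ∀ a b, 0 < w a b) :
    ∀ (n : ℕ) (p : List V), p.length ≤ n → IsPath w s t p →
      ∃ q, IsPath w s t q ∧ q.Nodup ∧ pWeight w q ≤ pWeight w p := by
  intro n
  induction n with
  | zero =>
    intro p hl h
    cases p with
    | nil => exact absurd rfl h.1
    | cons a l => simp at hl
  | succ n ih =>
    intro p hl h
    by_cases hnd : p.Nodup
    · exact ⟨p, h, hnd, le_rfl⟩
    · obtain ⟨q, hq, hlt, hlen⟩ := exists_lt_of_not_nodup hpos h hnd
      obtain ⟨r, hr, hrnd, hle⟩ := ih q (by omega) hq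
      exact ⟨r, hr, hrnd, hle.trans hlt.le⟩

lemma exists_nodup_le (hpos : ∀ a b, 0 < w a b) (h : IsPath w s t p) :
    ∃ q, IsPath w s t q ∧ q.Nodup ∧ pWeight w q ≤ pWeight w p :=
  exists_nodup_le_aux hpos p.length p le_rfl h

lemma IsShortest.nodup (hpos : ∀ a b, 0 < w a b) (h : IsShortest w s t p) : p.Nodup := by
  by_contra hnd
  obtain ⟨q, hq, hlt, -⟩ := exists_lt_of_not_nodup hpos h.1 hnd
  exact absurd (dist_le hq) (not_le.2 (h.2 ▸ hlt))

lemma exists_shortest (hpos : ∀ a b, 0 < w a b) [Fintype V] (h : dist w s t ≠ ⊤) :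
    ∃ p, IsShortest w s t p := by
  classical
  obtain ⟨p₀, hp₀⟩ := exists_path_of_dist_ne_top h
  set N : Set (List V) := {p | IsPath w s t p ∧ p.Nodup} with hN
  have hfin : N.Finite := by
    apply Set.Finite.subset (List.finite_length_le V (Fintype.card V))
    intro l hl
    exact hl.2.length_le_card
  have hne : N.Nonempty := by
    obtain ⟨q, hq, hqnd, -⟩ := exists_nodup_le hpos hp₀
    exact ⟨q, hq, hqnd⟩
  obtain ⟨p, hpN, hmin⟩ := Set.exists_min_image N (pWeight w) hfin hne
  refine ⟨p, hpN.1, le_antisymm ?_ (dist_le hpN.1)⟩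
  refine le_iInf₂ fun r hr => ?_
  obtain ⟨q, hq, hqnd, hle⟩ := exists_nodup_le hpos hr
  exact (hmin q ⟨hq, hqnd⟩).trans hle

lemma finite_shortest (hpos : ∀ a b, 0 < w a b) [Fintype V] :
    {p | IsShortest w s t p}.Finite := by
  apply Set.Finite.subset (List.finite_length_le V (Fintype.card V))
  intro l hl
  exact (hl.nodup hpos).length_le_card

lemma nsp_pos (hpos : ∀ a b, 0 < w a b) [Fintype V] (h : dist w s t ≠ ⊤) :
    0 < nsp w s t := by
  rw [nsp, Set.ncard_pos (finite_shortest hpos)]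
  exact exists_shortest hpos h

lemma shortest_empty_of_top (h : dist w s t = ⊤) : {p | IsShortest w s t p} = ∅ := by
  ext p
  simp only [Set.mem_setOf_eq, Set.mem_empty_iff_false, iff_false]
  rintro ⟨hp, hw⟩
  exact hp.pWeight_ne_top (hw.trans h)

lemma append_cons_inj {a : V} {l₁ l₂ m₁ m₂ : List V}
    (h : l₁ ++ a :: l₂ = m₁ ++ a :: m₂) (h₁ : a ∉ l₁) (h₂ : a ∉ m₁) :
    l₁ = m₁ ∧ l₂ = m₂ := by
  induction l₁ generalizing m₁ with
  | nil =>
    cases m₁ with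
    | nil => simpa using h
    | cons b m =>
      simp only [List.nil_append, List.cons_append, List.cons.injEq] at h
      exact absurd (by simp [h.1]) h₂
  | cons c l ih =>
    cases m₁ with
    | nil =>
      simp only [List.cons_append, List.nil_append, List.cons.injEq] at h
      exact absurd (by simp [h.1]) h₁
    | cons b m =>
      simp only [List.cons_append, List.cons.injEq] at h
      obtain ⟨rfl, h⟩ := h
      have := ih h (fun hm => h₁ (List.mem_cons_of_mem _ hm)) (fun hm => h₂ (List.mem_cons_of_mem _ hm))
      exact ⟨by rw [this.1], this.2⟩

lemma edgeOn_iff {a b : V} : edgeOn p a b ↔ ∃ l m, p = l ++ a :: b :: m := by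
  constructor
  · intro h
    rw [edgeOn] at h
    induction p with
    | nil => simp at h
    | cons c l ih =>
      cases l with
      | nil => simp at h
      | cons d m =>
        simp only [List.tail_cons, List.zip_cons_cons] at h
        rcases List.mem_cons.1 h with h | h
        · obtain ⟨rfl, rfl⟩ := Prod.ext_iff.1 h
          exact ⟨[], m, rfl⟩
        · obtain ⟨l', m', hl⟩ := ih h
          exact ⟨c :: l', m', by rw [List.cons_append, ← hl]⟩
  · rintro ⟨l, m, rfl⟩
    rw [edgeOn]
    induction l with
    | nil => simp
    | cons c l' ih =>
      rcases l' with - | ⟨d, l''⟩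
      · simp
      · simp only [List.cons_append] at ih ⊢
        simp only [List.tail_cons, List.zip_cons_cons]
        simp only [List.tail_cons] at ih
        exact List.mem_cons_of_mem _ ih

lemma mem_of_edgeOn {a b : V} (h : edgeOn p a b) : a ∈ p := by
  obtain ⟨l, m, rfl⟩ := edgeOn_iff.1 h
  exact List.mem_append_right l (by simp)

/-- A shortest path through an intermediate vertex other than the target
continues with a successor edge. -/
lemma exists_succ_of_mem (h : IsPath w s t p) (hx : x ∈ p) (hxt : x ≠ t) :
    ∃ u, edgeOn p x u := by
  obtain ⟨l, m, rfl⟩ := List.append_of_mem hx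
  cases m with
  | nil =>
    exfalso
    apply hxt
    have := h.2.2.1
    rw [List.getLast?_concat] at this
    exact (Option.some.injEq .. ▸ this).symm ▸ rfl
  | cons u m' => exact ⟨u, edgeOn_iff.2 ⟨l, m', rfl⟩⟩

/-- The set of "shortest continuations": paths from `u` to `t` which complete a shortest
`s`-`u` path to a shortest `s`-`t` path. -/
def suf (w : V → V → ℝ≥0∞) (s u t : V) : Set (List V) :=
  {q | IsPath w u t q ∧ dist w s u + pWeight w q = dist w s t}

lemma ncard_prod {α β : Type*} (A : Set α) (B : Set β) :
    (A ×ˢ B).ncard = A.ncard * B.ncard := by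
  rw [← Nat.card_coe_set_eq, ← Nat.card_coe_set_eq, ← Nat.card_coe_set_eq,
    ← Nat.card_prod]
  exact Nat.card_congr (Equiv.Set.prod A B)

lemma bijOn_ncard {α β : Type*} {A : Set α} {f : α → β} {B : Set β}
    (h : Set.BijOn f A B) : A.ncard = B.ncard := by
  rw [← h.image_eq]; exact (Set.ncard_image_of_injOn h.injOn).symm

lemma shortest_split [Fintype V] (hpos : ∀ a b, 0 < w a b) {l₁ l₂ : List V}
    (h : IsShortest w s t (l₁ ++ u :: l₂)) :
    IsShortest w s u (l₁ ++ [u]) ∧ (u :: l₂) ∈ suf w s u t := by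
  obtain ⟨h1, h2, h3⟩ := isPath_split h.1
  have hdu : dist w s u ≠ ⊤ := dist_ne_top_of_path h1
  obtain ⟨r, hr⟩ := exists_shortest hpos hdu
  obtain ⟨g1, g2⟩ := isPath_glue hr.1 h2
  have hle : dist w s t ≤ dist w s u + pWeight w (u :: l₂) := by
    have := dist_le g1
    rwa [g2, hr.2] at this
  have hfin : pWeight w (u :: l₂) ≠ ⊤ := h2.pWeight_ne_top
  have hpre : pWeight w (l₁ ++ [u]) = dist w s u := by
    refine le_antisymm ?_ (dist_le h1)
    have : pWeight w (l₁ ++ [u]) + pWeight w (u :: l₂)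
        ≤ dist w s u + pWeight w (u :: l₂) := by
      rw [← h3, h.2]; exact hle
    exact (ENNReal.add_le_add_iff_right hfin).1 this
  exact ⟨⟨h1, hpre⟩, h2, by rw [← hpre, ← h3, h.2]⟩

lemma shortest_glue (hp : IsShortest w s u p) {l₂ : List V} (hq : (u :: l₂) ∈ suf w s u t) :
    IsShortest w s t (p ++ l₂) := by
  obtain ⟨g1, g2⟩ := isPath_glue hp.1 hq.1
  exact ⟨g1, by rw [g2, hp.2, hq.2]⟩

lemma IsShortest.concat_shape (hp : IsShortest w s u p) : ∃ l, p = l ++ [u] :=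
  List.getLast?_eq_some_iff.mp hp.1.2.2.1

lemma IsShortest.mem_last (hp : IsShortest w s u p) : u ∈ p := by
  obtain ⟨l, rfl⟩ := hp.concat_shape
  exact List.mem_append_right l (by simp)

lemma ncard_via [Fintype V] (hpos : ∀ a b, 0 < w a b) (s t u : V) :
    nspVia w s t u = nsp w s u * (suf w s u t).ncard := by
  classical
  by_cases hdu : dist w s u = ⊤
  · have h1 : {p | IsShortest w s t p ∧ u ∈ p} = ∅ := by
      ext p
      simp only [Set.mem_setOf_eq, Set.mem_empty_iff_false, iff_false, not_and]
      intro hp hup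
      obtain ⟨l, m, rfl⟩ := List.append_of_mem hup
      exact (dist_ne_top_of_path (isPath_split hp.1).1) hdu
    have h2 : nsp w s u = 0 := by
      rw [nsp, shortest_empty_of_top hdu, Set.ncard_empty]
    rw [nspVia, h1, Set.ncard_empty, h2, zero_mul]
  by_cases hdt : dist w s t = ⊤
  · have h1 : {p | IsShortest w s t p ∧ u ∈ p} = ∅ := by
      ext p
      simp only [Set.mem_setOf_eq, Set.mem_empty_iff_false, iff_false, not_and]
      intro hp
      exact absurd (hp.2.trans hdt) hp.1.pWeight_ne_top
    have h2 : suf w s u t = ∅ := by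
      ext q
      simp only [suf, Set.mem_setOf_eq, Set.mem_empty_iff_false, iff_false, not_and]
      intro hq1 hq2
      exact ENNReal.add_ne_top.2 ⟨hdu, hq1.pWeight_ne_top⟩ (hq2.trans hdt)
    rw [nspVia, h1, Set.ncard_empty, h2, Set.ncard_empty, mul_zero]
  have hbij : Set.BijOn (fun pq : List V × List V => pq.1 ++ pq.2.tail)
      ({p | IsShortest w s u p} ×ˢ suf w s u t) {p | IsShortest w s t p ∧ u ∈ p} := by
    refine ⟨?_, ?_, ?_⟩
    · rintro ⟨p₁, q⟩ ⟨hp₁, hq⟩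
      obtain ⟨m, rfl⟩ := (hq.1).head_eq
      have hs := shortest_glue hp₁ hq
      exact ⟨hs, List.mem_append_left m hp₁.mem_last⟩
    · rintro ⟨p₁, q₁⟩ ⟨hp₁, hq₁⟩ ⟨p₂, q₂⟩ ⟨hp₂, hq₂⟩ heq
      simp only [Set.mem_setOf_eq] at hp₁ hp₂ hq₁ hq₂
      obtain ⟨m₁, rfl⟩ := (hq₁.1).head_eq
      obtain ⟨m₂, rfl⟩ := (hq₂.1).head_eq
      obtain ⟨l₁, rfl⟩ := hp₁.concat_shape
      obtain ⟨l₂, rfl⟩ := hp₂.concat_shape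
      simp only [List.tail_cons] at heq
      rw [List.append_assoc, List.singleton_append] at heq
      rw [List.append_assoc, List.singleton_append] at heq
      have hnd : (l₁ ++ u :: m₁).Nodup := by
        have := (shortest_glue hp₁ hq₁).nodup hpos
        rwa [List.append_assoc, List.singleton_append] at this
      have hnd₂ : (l₂ ++ u :: m₂).Nodup := by
        have := (shortest_glue hp₂ hq₂).nodup hpos
        rwa [List.append_assoc, List.singleton_append] at this
      have hu₁ : u ∉ l₁ := fun hmem =>
        (List.disjoint_of_nodup_append hnd) hmem (by simp)
      have hu₂ : u ∉ l₂ := fun hmem =>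
        (List.disjoint_of_nodup_append hnd₂) hmem (by simp)
      obtain ⟨he1, he2⟩ := append_cons_inj heq hu₁ hu₂
      simp [he1, he2]
    · rintro p ⟨hp, hup⟩
      obtain ⟨l, m, rfl⟩ := List.append_of_mem hup
      have hs := shortest_split hpos hp
      exact ⟨(l ++ [u], u :: m), ⟨hs.1, hs.2⟩, by simp⟩
  rw [nspVia, ← bijOn_ncard hbij, ncard_prod, nsp]

lemma ncard_edge [Fintype V] (hpos : ∀ a b, 0 < w a b) (t : V) (hw : w x u ≠ ⊤)
    (hd : dist w s u = dist w s x + w x u) (hdx : dist w s x ≠ ⊤) :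
    {p | IsShortest w s t p ∧ edgeOn p x u}.ncard = nsp w s x * (suf w s u t).ncard := by
  classical
  have hdu : dist w s u ≠ ⊤ := by rw [hd]; exact ENNReal.add_ne_top.2 ⟨hdx, hw⟩
  by_cases hdt : dist w s t = ⊤
  · have h1 : {p | IsShortest w s t p ∧ edgeOn p x u} = ∅ := by
      ext p
      simp only [Set.mem_setOf_eq, Set.mem_empty_iff_false, iff_false, not_and]
      intro hp
      exact absurd (hp.2.trans hdt) hp.1.pWeight_ne_top
    have h2 : suf w s u t = ∅ := by
      ext q
      simp only [suf, Set.mem_setOf_eq, Set.mem_empty_iff_false, iff_false, not_and]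
      intro hq1 hq2
      exact ENNReal.add_ne_top.2 ⟨hdu, hq1.pWeight_ne_top⟩ (hq2.trans hdt)
    rw [h1, Set.ncard_empty, h2, Set.ncard_empty, mul_zero]
  have hbij : Set.BijOn (fun pq : List V × List V => pq.1 ++ pq.2)
      ({p | IsShortest w s x p} ×ˢ suf w s u t) {p | IsShortest w s t p ∧ edgeOn p x u} := by
    refine ⟨?_, ?_, ?_⟩
    · rintro ⟨p₁, q⟩ ⟨hp₁, hq⟩
      simp only [Set.mem_setOf_eq] at hp₁ hq
      obtain ⟨m, rfl⟩ := (hq.1).head_eq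
      have hpath : IsPath w x t (x :: u :: m) := isPath_cons_cons.2 ⟨rfl, hw, hq.1⟩
      obtain ⟨g1, g2⟩ := isPath_glue hp₁.1 hpath
      obtain ⟨l, rfl⟩ := hp₁.concat_shape
      refine ⟨⟨g1, ?_⟩, edgeOn_iff.2 ⟨l, m, by simp⟩⟩
      rw [g2, hp₁.2, pWeight_cons_cons, ← add_assoc, ← hd, hq.2]
    · rintro ⟨p₁, q₁⟩ ⟨hp₁, hq₁⟩ ⟨p₂, q₂⟩ ⟨hp₂, hq₂⟩ heq
      simp only [Set.mem_setOf_eq] at hp₁ hp₂ hq₁ hq₂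
      obtain ⟨m₁, rfl⟩ := (hq₁.1).head_eq
      obtain ⟨m₂, rfl⟩ := (hq₂.1).head_eq
      obtain ⟨l₁, rfl⟩ := hp₁.concat_shape
      obtain ⟨l₂, rfl⟩ := hp₂.concat_shape
      simp only at heq
      rw [List.append_assoc, List.singleton_append] at heq
      rw [List.append_assoc, List.singleton_append] at heq
      have hnd : (l₁ ++ x :: u :: m₁).Nodup := by
        have hpath : IsPath w x t (x :: u :: m₁) := isPath_cons_cons.2 ⟨rfl, hw, hq₁.1⟩
        obtain ⟨g1, g2⟩ := isPath_glue hp₁.1 hpath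
        have hsh : IsShortest w s t ((l₁ ++ [x]) ++ u :: m₁) :=
          ⟨g1, by rw [g2, hp₁.2, pWeight_cons_cons, ← add_assoc, ← hd, hq₁.2]⟩
        have := hsh.nodup hpos
        rwa [List.append_assoc, List.singleton_append] at this
      have hnd₂ : (l₂ ++ x :: u :: m₂).Nodup := by
        have hpath : IsPath w x t (x :: u :: m₂) := isPath_cons_cons.2 ⟨rfl, hw, hq₂.1⟩
        obtain ⟨g1, g2⟩ := isPath_glue hp₂.1 hpath
        have hsh : IsShortest w s t ((l₂ ++ [x]) ++ u :: m₂) :=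
          ⟨g1, by rw [g2, hp₂.2, pWeight_cons_cons, ← add_assoc, ← hd, hq₂.2]⟩
        have := hsh.nodup hpos
        rwa [List.append_assoc, List.singleton_append] at this
      have hx₁ : x ∉ l₁ := fun hmem =>
        (List.disjoint_of_nodup_append hnd) hmem (by simp)
      have hx₂ : x ∉ l₂ := fun hmem =>
        (List.disjoint_of_nodup_append hnd₂) hmem (by simp)
      obtain ⟨he1, he2⟩ := append_cons_inj heq hx₁ hx₂
      simp only [List.cons.injEq] at he2
      simp [he1, he2.2]
    · rintro p ⟨hp, hep⟩
      obtain ⟨l, m, rfl⟩ := edgeOn_iff.1 hep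
      have hs := shortest_split hpos (u := x) hp
      have hp' : IsShortest w s t ((l ++ [x]) ++ u :: m) := by
        rw [List.append_assoc, List.singleton_append]; exact hp
      have hs' := shortest_split hpos hp'
      have hqpath : IsPath w u t (u :: m) := (isPath_cons_cons.1 hs.2.1).2.2
      have hqmem : (u :: m) ∈ suf w s u t := by
        refine ⟨hqpath, ?_⟩
        have := hs.2.2
        rw [pWeight_cons_cons] at this
        rw [hd, add_assoc]
        exact this
      exact ⟨(l ++ [x], u :: m), ⟨hs.1, hqmem⟩, by simp⟩
  rw [← bijOn_ncard hbij, ncard_prod, nsp]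

lemma edge_empty [Fintype V] (hpos : ∀ a b, 0 < w a b) (t : V)
    (h : ¬ (w x u ≠ ⊤ ∧ dist w s u = dist w s x + w x u)) :
    {p | IsShortest w s t p ∧ edgeOn p x u} = ∅ := by
  ext p
  simp only [Set.mem_setOf_eq, Set.mem_empty_iff_false, iff_false, not_and]
  intro hp hep
  obtain ⟨l, m, rfl⟩ := edgeOn_iff.1 hep
  have hs := shortest_split hpos (u := x) hp
  have hp' : IsShortest w s t ((l ++ [x]) ++ u :: m) := by
    rw [List.append_assoc, List.singleton_append]; exact hp
  have hs' := shortest_split hpos hp'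
  apply h
  refine ⟨(isPath_cons_cons.1 hs.2.1).2.1, ?_⟩
  have h1 : pWeight w ((l ++ [x]) ++ [u]) = dist w s u := hs'.1.2
  have hpx : IsPath w s u (l ++ x :: [u]) := by
    have := hs'.1.1
    rwa [List.append_assoc, List.singleton_append] at this
  have h2 : pWeight w (l ++ x :: [u])
      = pWeight w (l ++ [x]) + pWeight w (x :: [u]) := (isPath_split hpx).2.2
  rw [← h1, show (l ++ [x]) ++ [u] = l ++ x :: [u] by simp, h2, hs.1.2, pWeight_cons_cons,
    pWeight_single, add_zero]

lemma suf_self (hpos : ∀ a b, 0 < w a b) (hdu : dist w s u ≠ ⊤) :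
    suf w s u u = {[u]} := by
  ext q
  simp only [suf, Set.mem_setOf_eq, Set.mem_singleton_iff]
  constructor
  · rintro ⟨hq1, hq2⟩
    have h0 : pWeight w q = 0 :=
      (ENNReal.add_right_inj hdu).1 (hq2.trans (add_zero (dist w s u)).symm)
    obtain ⟨m, rfl⟩ := hq1.head_eq
    cases m with
    | nil => rfl
    | cons b m' => exact absurd h0 (pWeight_pos hpos).ne'
  · rintro rfl
    exact ⟨isPath_single, by rw [pWeight_single, add_zero]⟩

lemma suf_to_pred_empty (hpos : ∀ a b, 0 < w a b) (_hw : w x u ≠ ⊤)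
    (hd : dist w s u = dist w s x + w x u) (hdx : dist w s x ≠ ⊤) :
    suf w s u x = ∅ := by
  ext q
  simp only [suf, Set.mem_setOf_eq, Set.mem_empty_iff_false, iff_false, not_and]
  intro hq1 hq2
  have hlt : dist w s x < dist w s u := by
    rw [hd]
    exact ENNReal.lt_add_right hdx (hpos x u).ne'
  exact (hlt.trans_le le_self_add).ne' hq2

lemma nspVia_eq_sum [Fintype V] (hpos : ∀ a b, 0 < w a b) (s x t : V) (hxt : x ≠ t) :
    nspVia w s t x = ∑ u : V, {p | IsShortest w s t p ∧ edgeOn p x u}.ncard := by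
  classical
  have hfin : ∀ u : V, {p | IsShortest w s t p ∧ edgeOn p x u}.Finite := fun u =>
    (finite_shortest hpos).subset fun p hp => hp.1
  have hfin0 : {p | IsShortest w s t p ∧ x ∈ p}.Finite :=
    (finite_shortest hpos).subset fun p hp => hp.1
  have hset : hfin0.toFinset = Finset.univ.biUnion (fun u => (hfin u).toFinset) := by
    ext p
    simp only [Set.Finite.mem_toFinset, Set.mem_setOf_eq, Finset.mem_biUnion,
      Finset.mem_univ, true_and]
    constructor
    · rintro ⟨hp, hxp⟩
      obtain ⟨u, hu⟩ := exists_succ_of_mem hp.1 hxp hxt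
      exact ⟨u, hp, hu⟩
    · rintro ⟨u, hp, hu⟩
      exact ⟨hp, mem_of_edgeOn hu⟩
  have hdisj : ∀ u ∈ Finset.univ, ∀ v ∈ Finset.univ, u ≠ (v : V) →
      Disjoint ((hfin u).toFinset) ((hfin v).toFinset) := by
    intro u _ v _ huv
    rw [Finset.disjoint_left]
    intro p hpu hpv
    rw [Set.Finite.mem_toFinset, Set.mem_setOf_eq] at hpu hpv
    obtain ⟨l, m, hp1⟩ := edgeOn_iff.1 hpu.2
    obtain ⟨l', m', hp2⟩ := edgeOn_iff.1 hpv.2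
    have hnd := hpu.1.nodup hpos
    have hx₁ : x ∉ l := fun hmem =>
      (List.disjoint_of_nodup_append (hp1 ▸ hnd)) hmem (by simp)
    have hx₂ : x ∉ l' := fun hmem =>
      (List.disjoint_of_nodup_append (hp2 ▸ hnd)) hmem (by simp)
    obtain ⟨-, he2⟩ := append_cons_inj (hp1 ▸ hp2 : l ++ x :: u :: m = l' ++ x :: v :: m') hx₁ hx₂
    simp only [List.cons.injEq] at he2
    exact huv he2.1
  rw [nspVia, Set.ncard_eq_toFinset_card _ hfin0, hset, Finset.card_biUnion hdisj]
  refine Finset.sum_congr rfl fun u _ => ?_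
  rw [Set.ncard_eq_toFinset_card _ (hfin u)]

end Aux





/- STATEMENT 1: Brandes' recursion
`δ_{s•}(x) = Σ_{t : x ∈ P_s(t)} (σ_{sx} / σ_{st}) · (1 + δ_{s•}(t))`,
where `x ∈ P_s(t)` iff `(x,t)` is an edge and `d(s,t) = d(s,x) + w(x,t)`. -/
open Classical in
theorem brandes_recursion [Fintype V] (w : V → V → ℝ≥0∞)
    (hpos : ∀ a b, 0 < w a b) (s x : V) (hxs : x ≠ s) :
    dep w s x = ∑ t : V,
      if w x t ≠ ⊤ ∧ dist w s t = dist w s x + w x t then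
        ((nsp w s x : ℝ) / (nsp w s t : ℝ)) * (1 + dep w s t)
      else 0 := by
  classical
  by_cases hdx : dist w s x = ⊤
  · have hdep : dep w s x = 0 := by
      rw [dep]
      refine Finset.sum_eq_zero fun t _ => ?_
      split_ifs with h
      · have h1 : {p | IsShortest w s t p ∧ x ∈ p} = ∅ := by
          ext p
          simp only [Set.mem_setOf_eq, Set.mem_empty_iff_false, iff_false, not_and]
          intro hp hxp
          obtain ⟨l, m, rfl⟩ := List.append_of_mem hxp
          exact (dist_ne_top_of_path (isPath_split hp.1).1) hdx
        rw [nspVia, h1, Set.ncard_empty]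
        simp
      · rfl
    rw [hdep]
    symm
    refine Finset.sum_eq_zero fun u _ => ?_
    split_ifs with h
    · have hu : dist w s u = ⊤ := by rw [h.2, hdx, top_add]
      have hn : nsp w s u = 0 := by rw [nsp, shortest_empty_of_top hu, Set.ncard_empty]
      rw [hn]
      simp
    · rfl
  · have key : dep w s x = ∑ u : V, ∑ t : V,
        (if t ≠ x ∧ t ≠ s then
          (({p | IsShortest w s t p ∧ edgeOn p x u}.ncard : ℝ)) / (nsp w s t : ℝ)
        else 0) := by
      rw [Finset.sum_comm, dep]
      refine Finset.sum_congr rfl fun t _ => ?_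
      split_ifs with h
      · rw [nspVia_eq_sum hpos s x t (fun he => h.1 he.symm), Nat.cast_sum, Finset.sum_div]
      · exact Finset.sum_const_zero.symm
    rw [key]
    refine Finset.sum_congr rfl fun u _ => ?_
    by_cases hD : w x u ≠ ⊤ ∧ dist w s u = dist w s x + w x u
    · rw [if_pos hD]
      obtain ⟨hw, hd⟩ := hD
      have hdu : dist w s u ≠ ⊤ := by rw [hd]; exact ENNReal.add_ne_top.2 ⟨hdx, hw⟩
      have hσu : (nsp w s u : ℝ) ≠ 0 := by
        exact_mod_cast (nsp_pos hpos hdu).ne'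
      have hux : u ≠ x := by
        intro he
        have hlt := ENNReal.lt_add_right hdx (hpos x u).ne'
        rw [← hd, he] at hlt
        exact lt_irrefl _ hlt
      have hus : u ≠ s := by
        intro he
        have h0 : dist w s u = 0 := by rw [he, dist_self]
        have hgt : (0 : ℝ≥0∞) < dist w s u := by
          rw [hd]; exact lt_of_lt_of_le (hpos x u) le_add_self
        exact hgt.ne' h0
      have hGL : ∀ t : V, (if t ≠ x ∧ t ≠ s then
          (({p | IsShortest w s t p ∧ edgeOn p x u}.ncard : ℝ)) / (nsp w s t : ℝ) else 0)
          = (if t ≠ s then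
              (nsp w s x : ℝ) * ((suf w s u t).ncard : ℝ) / (nsp w s t : ℝ) else 0) := by
        intro t
        by_cases hts : t = s
        · simp [hts]
        by_cases htx : t = x
        · subst htx
          rw [if_neg (by simp), if_pos hts]
          rw [suf_to_pred_empty hpos hw hd hdx]
          simp
        · rw [if_pos ⟨htx, hts⟩, if_pos hts, ncard_edge hpos t hw hd hdx]
          push_cast
          ring
      rw [Finset.sum_congr rfl (fun t _ => hGL t)]
      have hHR : ∀ t : V, (nsp w s x : ℝ) / (nsp w s u : ℝ) *
          (if t ≠ u ∧ t ≠ s then (nspVia w s t u : ℝ) / (nsp w s t : ℝ) else 0)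
          = (if t ≠ u ∧ t ≠ s then
              (nsp w s x : ℝ) * ((suf w s u t).ncard : ℝ) / (nsp w s t : ℝ) else 0) := by
        intro t
        rw [mul_ite, mul_zero]
        refine if_congr Iff.rfl ?_ rfl
        rw [ncard_via hpos s t u]
        push_cast
        rw [div_mul_div_comm, mul_left_comm]
        rw [mul_div_mul_left _ _ hσu]
      rw [dep, mul_add, mul_one, Finset.mul_sum]
      rw [Finset.sum_congr rfl (fun t _ => hHR t)]
      rw [← Finset.add_sum_erase _ _ (Finset.mem_univ u)]
      rw [← Finset.add_sum_erase _
        (fun t => if t ≠ u ∧ t ≠ s then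
          (nsp w s x : ℝ) * ((suf w s u t).ncard : ℝ) / (nsp w s t : ℝ) else 0)
        (Finset.mem_univ u)]
      congr 1
      · rw [if_pos hus, suf_self hpos hdu]
        simp
      · rw [if_neg (by simp), zero_add]
        refine Finset.sum_congr rfl fun t ht => ?_
        have htu : t ≠ u := (Finset.mem_erase.1 ht).1
        by_cases hts : t = s
        · simp [hts]
        · rw [if_pos hts, if_pos ⟨htu, hts⟩]
    · rw [if_neg hD]
      refine Finset.sum_eq_zero fun t _ => ?_
      split_ifs with h
      · rw [edge_empty hpos t hD, Set.ncard_empty]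
        simp
      · rfl

end BC
end

section
/- After an incremental update on the set E_i(v) of edges incoming to v, for every source s ∈ V: d'(s,v) = min{ d(s,v), min_{j : (u_j,v) ∈ E_i(v)} ( d(s,u_j) + w'(u_j,v) ) }. -/
open scoped ENNReal

namespace BC

variable {V : Type*}

/-- The list of consecutive edges of a path. -/
def edges (p : List V) : List (V × V) := p.zip p.tail

lemma pWeight_eq (w : V → V → ℝ≥0∞) (p : List V) :
    pWeight w p = ((edges p).map fun e => w e.1 e.2).sum := rfl

@[simp] lemma edges_nil : edges ([] : List V) = [] := rfl
@[simp] lemma edges_single (a : V) : edges [a] = [] := rfl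
@[simp] lemma edges_cons_cons (a b : V) (t : List V) :
    edges (a :: b :: t) = (a, b) :: edges (b :: t) := rfl

lemma chain'_iff_edges {R : V → V → Prop} :
    ∀ {p : List V}, p.Chain' R ↔ ∀ e ∈ edges p, R e.1 e.2
  | [] => by simp [List.Chain']
  | [a] => by simp [List.Chain']
  | a :: b :: t => by
    have ih := chain'_iff_edges (R := R) (p := b :: t)
    simp only [List.Chain'] at ih ⊢
    rw [List.isChain_cons_cons, ih]
    simp

lemma edges_append : ∀ (l l' : List V) (h : l ≠ []) (h' : l' ≠ []),
    edges (l ++ l') = edges l ++ (l.getLast h, l'.head h') :: edges l'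
  | [], _, h, _ => absurd rfl h
  | [a], l', _, h' => by
    cases l' with
    | nil => exact absurd rfl h'
    | cons c t => simp [edges]
  | a :: b :: t, l', _, h' => by
    have := edges_append (b :: t) l' (by simp) h'
    simp only [List.cons_append, edges_cons_cons, List.cons_append] at this ⊢
    rw [this]
    simp

lemma pWeight_append (w : V → V → ℝ≥0∞) (l l' : List V) (h : l ≠ []) (h' : l' ≠ []) :
    pWeight w (l ++ l') = pWeight w l + w (l.getLast h) (l'.head h') + pWeight w l' := by
  rw [pWeight_eq, edges_append l l' h h', pWeight_eq, pWeight_eq]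
  simp [add_assoc]

lemma pWeight_concat (w : V → V → ℝ≥0∞) (l : List V) (v : V) (h : l ≠ []) :
    pWeight w (l ++ [v]) = pWeight w l + w (l.getLast h) v := by
  rw [pWeight_append w l [v] h (by simp)]
  simp [pWeight]

lemma pWeight_le_append (w : V → V → ℝ≥0∞) (l l' : List V) :
    pWeight w l ≤ pWeight w (l ++ l') := by
  rcases eq_or_ne l [] with rfl | h
  · simp [pWeight]
  rcases eq_or_ne l' [] with rfl | h'
  · simp
  rw [pWeight_append w l l' h h']
  exact le_add_right (le_add_right le_rfl)

lemma dist_le_pWeight {w : V → V → ℝ≥0∞} {s t : V} {p : List V} (h : IsPath w s t p) :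
    dist w s t ≤ pWeight w p := iInf₂_le p h

lemma pWeight_mono {w w' : V → V → ℝ≥0∞} (hle : ∀ a b, w' a b ≤ w a b) (p : List V) :
    pWeight w' p ≤ pWeight w p :=
  List.sum_le_sum (by rintro x hx; exact hle _ _) |>.trans_eq rfl

lemma isPath_mono {w w' : V → V → ℝ≥0∞} (hle : ∀ a b, w' a b ≤ w a b) {s t : V} {p : List V}
    (h : IsPath w s t p) : IsPath w' s t p :=
  ⟨h.1, h.2.1, h.2.2.1, h.2.2.2.imp fun {a b} hab =>
    ((hle a b).trans_lt hab.lt_top).ne⟩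

lemma dist_mono {w w' : V → V → ℝ≥0∞} (hle : ∀ a b, w' a b ≤ w a b) (s t : V) :
    dist w' s t ≤ dist w s t :=
  le_iInf₂ fun p hp => (dist_le_pWeight (isPath_mono hle hp)).trans (pWeight_mono hle p)

lemma isPath_concat {w : V → V → ℝ≥0∞} {s u v : V} {p : List V} (h : IsPath w s u p)
    (hw : w u v ≠ ⊤) : IsPath w s v (p ++ [v]) := by
  obtain ⟨hne, hh, hl, hc⟩ := h
  have hu : p.getLast hne = u := by
    rcases List.mem_getLast?_eq_getLast hl with ⟨_, h2⟩; exact h2.symm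
  refine ⟨by simp, by rwa [List.head?_append_of_ne_nil _ hne], by simp, ?_⟩
  rw [chain'_iff_edges, edges_append p [v] hne (by simp)]
  intro e he
  simp only [edges_single, List.mem_append, List.mem_cons, List.not_mem_nil, or_false] at he
  rcases he with he | rfl
  · exact chain'_iff_edges.mp hc e he
  · simpa [hu] using hw

/-- after an incremental update on the set `E_i(v) = {(u,v) : u ∈ U}` of
edges incoming to `v` (each weight decreased, insertion being a decrease from `⊤`),
`d'(s,v) = min( d(s,v), min_{u ∈ U} ( d(s,u) + w'(u,v) ) )`. -/
theorem vertex_update_dist_to_v [Fintype V]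
(w w' : V → V → ℝ≥0∞) (v : V) (U : Finset V)
    (hpos : ∀ a b, 0 < w a b) (hpos' : ∀ a b, 0 < w' a b)
    (hdec : ∀ u ∈ U, w' u v < w u v)
    (hsame : ∀ a b : V, ¬(b = v ∧ a ∈ U) → w' a b = w a b)
    (s : V) :
    dist w' s v = min (dist w s v) (⨅ u ∈ U, dist w s u + w' u v) := by
  have hle : ∀ a b, w' a b ≤ w a b := by
    intro a b
    by_cases h : b = v ∧ a ∈ U
    · obtain ⟨rfl, hU⟩ := h; exact (hdec a hU).le
    · rw [hsame a b h]
  refine le_antisymm (le_min (dist_mono hle s v) ?_) ?_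
  · -- dist w' s v ≤ ⨅ u ∈ U, dist w s u + w' u v
    refine le_iInf₂ fun u hu => ?_
    rw [← tsub_le_iff_right, dist]
    refine le_iInf₂ fun p hp => ?_
    rw [tsub_le_iff_right]
    have hp : IsPath w s u p := hp
    have hwuv : w' u v ≠ ⊤ := ((hdec u hu).trans_le le_top).ne
    have hp' : IsPath w' s u p := isPath_mono hle hp
    have hu' : p.getLast hp.1 = u := by
      rcases List.mem_getLast?_eq_getLast hp.2.2.1 with ⟨_, h2⟩; exact h2.symm
    calc dist w' s v ≤ pWeight w' (p ++ [v]) := dist_le_pWeight (isPath_concat hp' hwuv)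
      _ = pWeight w' p + w' u v := by rw [pWeight_concat w' p v hp.1, hu']
      _ ≤ pWeight w p + w' u v := add_le_add_left (pWeight_mono hle p) _
  · -- min ... ≤ dist w' s v
    have key : ∀ n (p : List V), p.length ≤ n → IsPath w' s v p →
        min (dist w s v) (⨅ u ∈ U, dist w s u + w' u v) ≤ pWeight w' p := by
      intro n
      induction n with
      | zero =>
        intro p hlen hp
        exact absurd (List.length_eq_zero_iff.mp (Nat.le_zero.mp hlen)) hp.1
      | succ n ih =>
        intro p hlen hp
        obtain ⟨hne, hh, hlast, hc⟩ := hp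
        have hv' : p.getLast hne = v := by
          rcases List.mem_getLast?_eq_getLast hlast with ⟨_, h2⟩; exact h2.symm
        have hpd : p.dropLast ++ [v] = p := by
          conv_rhs => rw [← List.dropLast_append_getLast hne, hv']
        rcases eq_or_ne p.dropLast [] with hl | hl
        · -- p = [v] and s = v
          have hp1 : p = [v] := by rw [← hpd, hl]; rfl
          have hsv : v = s := by rw [hp1] at hh; simpa using hh
          have hvp : IsPath w s v [v] := ⟨by simp, by simp [hsv], by simp, by simp [List.Chain']⟩
          calc min (dist w s v) _ ≤ dist w s v := min_le_left _ _
            _ ≤ pWeight w [v] := dist_le_pWeight hvp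
            _ = pWeight w' p := by rw [hp1]; rfl
        · set l := p.dropLast with hldef
          set u := l.getLast hl with hudef
          by_cases hvl : v ∈ l
          · -- truncate at an earlier occurrence of v
            obtain ⟨a, b, hab⟩ := List.append_of_mem hvl
            have hq : p = (a ++ [v]) ++ (b ++ [v]) := by
              rw [← hpd, hab]; simp
            have hqlen : (a ++ [v]).length ≤ n := by
              have hplen := congrArg List.length hq
              simp only [List.length_append, List.length_cons, List.length_singleton] at hplen ⊢
              omega
            have hqpath : IsPath w' s v (a ++ [v]) := by
              refine ⟨by simp, ?_, by simp, ?_⟩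
              · rw [hq, List.head?_append_of_ne_nil _ (by simp)] at hh; exact hh
              · rw [hq] at hc
                exact (List.isChain_append.mp hc).1
            calc min (dist w s v) _ ≤ pWeight w' (a ++ [v]) := ih _ hqlen hqpath
              _ ≤ pWeight w' p := by rw [hq]; exact pWeight_le_append w' _ _
          · -- v occurs only at the end
            have hedges : edges p = edges l ++ [(u, v)] := by
              rw [← hpd, edges_append l [v] hl (by simp)]; rfl
            have hel : ∀ e ∈ edges l, w' e.1 e.2 = w e.1 e.2 := by
              intro e he
              refine hsame _ _ ?_
              rintro ⟨h2, -⟩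
              have : e.2 ∈ l.tail :=
                (List.of_mem_zip (show (e.1, e.2) ∈ l.zip l.tail by simpa [edges] using he)).2
              exact hvl (h2 ▸ List.mem_of_mem_tail this)
            have hcedges := chain'_iff_edges.mp hc
            by_cases hU : u ∈ U
            · -- last edge is an updated edge
              have hchl : l.Chain' fun a b => w a b ≠ ⊤ := by
                refine chain'_iff_edges.mpr fun e he => ?_
                rw [← hel e he]
                exact hcedges e (by rw [hedges]; exact List.mem_append_left _ he)
              have hlpath : IsPath w s u l := by
                refine ⟨hl, ?_, List.getLast?_eq_getLast_of_ne_nil hl, hchl⟩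
                rw [← hpd, List.head?_append_of_ne_nil _ hl] at hh; exact hh
              have hwsum : pWeight w' p = pWeight w' l + w' u v := by
                rw [← hpd, pWeight_concat w' l v hl]
              have hll : pWeight w' l = pWeight w l := by
                rw [pWeight_eq, pWeight_eq]
                exact congrArg List.sum (List.map_congr_left hel)
              calc min (dist w s v) (⨅ u ∈ U, dist w s u + w' u v)
                  ≤ ⨅ u ∈ U, dist w s u + w' u v := min_le_right _ _
                _ ≤ dist w s u + w' u v := iInf₂_le u hU
                _ ≤ pWeight w l + w' u v := add_le_add_left (dist_le_pWeight hlpath) _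
                _ = pWeight w' p := by rw [hwsum, hll]
            · -- p is a w-path of the same weight
              have hep : ∀ e ∈ edges p, w' e.1 e.2 = w e.1 e.2 := by
                intro e he
                rw [hedges, List.mem_append, List.mem_singleton] at he
                rcases he with he | rfl
                · exact hel e he
                · exact hsame u v (by rintro ⟨-, h⟩; exact hU h)
              have hppath : IsPath w s v p :=
                ⟨hne, hh, hlast, chain'_iff_edges.mpr fun e he => hep e he ▸ hcedges e he⟩
              calc min (dist w s v) _ ≤ dist w s v := min_le_left _ _
                _ ≤ pWeight w p := dist_le_pWeight hppath
                _ = pWeight w' p := by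
                    rw [pWeight_eq, pWeight_eq]
                    exact congrArg List.sum (List.map_congr_left hep).symm
    rw [dist]
    exact le_iInf₂ fun p hp => key p.length p le_rfl hp


end BC
end
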